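/- The function f(x) = (9x⁴/4 + 12x³ − 15x² + 36x − 36)e^{-3x} + 36e^{-4x} is nonnegative for all x ≥ 0 and satisfies ∫_0^∞ f(x) dx = 1. -/

import Mathlib

open Real MeasureTheory Set

private lemma integrable_pow_exp (n : ℕ) {b : ℝ} (hb : 0 < b) :
    IntegrableOn (fun x : ℝ => x ^ n * Real.exp (-b * x)) (Ioi 0) := by
  have h := integrableOn_rpow_mul_exp_neg_mul_rpow (p := 1) (s := (n : ℝ)) (b := b)
    (by linarith [Nat.cast_nonneg (α := ℝ) n]) zero_lt_one hb
  refine h.congr_fun (fun x hx => ?_) measurableSet_Ioi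
  rw [mem_Ioi] at hx
  beta_reduce
  rw [Real.rpow_natCast, Real.rpow_one]

private lemma integral_pow_exp (n : ℕ) {b : ℝ} (hb : 0 < b) :
    ∫ x in Ioi (0 : ℝ), x ^ n * Real.exp (-b * x) = n.factorial / b ^ (n + 1) := by
  have h := Real.integral_rpow_mul_exp_neg_mul_Ioi (a := (n : ℝ) + 1) (r := b)
    (by positivity) hb
  rw [Real.Gamma_nat_eq_factorial] at h
  rw [show (∫ x in Ioi (0:ℝ), x ^ n * Real.exp (-b * x))
      = ∫ t in Ioi (0:ℝ), t ^ ((n : ℝ) + 1 - 1) * Real.exp (-(b * t)) from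
    setIntegral_congr_fun measurableSet_Ioi (fun x hx => by
      rw [mem_Ioi] at hx
      rw [add_sub_cancel_right, Real.rpow_natCast, neg_mul]), h]
  rw [show ((n:ℝ)+1) = ((n+1 : ℕ):ℝ) by push_cast; ring, Real.rpow_natCast, div_pow, one_pow]
  ring

private lemma G_nonneg : ∀ x : ℝ, 0 ≤ x →
    0 ≤ 9 * x ^ 4 / 4 + 12 * x ^ 3 - 15 * x ^ 2 + 36 * x - 36 + 36 * Real.exp (-x) := by
  set G : ℝ → ℝ := fun x => 9 * x ^ 4 / 4 + 12 * x ^ 3 - 15 * x ^ 2 + 36 * x - 36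
    + 36 * Real.exp (-x) with hG
  have hderiv : ∀ x : ℝ, HasDerivAt G
      (9 * x ^ 3 + 36 * x ^ 2 - 30 * x + 36 - 36 * Real.exp (-x)) x := by
    intro x
    have h1 : HasDerivAt (fun x : ℝ => Real.exp (-x)) (-Real.exp (-x)) x := by
      simpa using (hasDerivAt_neg x).exp
    have h2 : HasDerivAt (fun x : ℝ => 9 * x ^ 4 / 4 + 12 * x ^ 3 - 15 * x ^ 2 + 36 * x - 36)
        (9 * x ^ 3 + 36 * x ^ 2 - 30 * x + 36) x := by
      have := ((((hasDerivAt_pow 4 x).const_mul (9:ℝ)).div_const 4).add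
        ((hasDerivAt_pow 3 x).const_mul (12:ℝ))).sub ((hasDerivAt_pow 2 x).const_mul (15:ℝ))
      have := (this.add ((hasDerivAt_id x).const_mul (36:ℝ))).sub_const 36
      exact this.congr_deriv (by norm_num; ring)
    exact (h2.add (h1.const_mul (36:ℝ))).congr_deriv (by ring)
  have hd : Differentiable ℝ G := fun x => (hderiv x).differentiableAt
  have hmono : MonotoneOn G (Ici 0) := by
    apply monotoneOn_of_deriv_nonneg (convex_Ici 0) hd.continuous.continuousOn
      hd.differentiableOn
    intro x hx
    rw [interior_Ici, mem_Ioi] at hx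
    rw [(hderiv x).deriv]
    have hx1 : (0:ℝ) < 1 + x := by linarith
    have he : Real.exp (-x) ≤ (1 + x)⁻¹ := by
      rw [Real.exp_neg]
      exact inv_anti₀ hx1 (by linarith [Real.add_one_le_exp x])
    have h2 : Real.exp (-x) * (1 + x) ≤ 1 := by
      calc Real.exp (-x) * (1 + x) ≤ (1 + x)⁻¹ * (1 + x) := by nlinarith
        _ = 1 := inv_mul_cancel₀ hx1.ne'
    nlinarith [Real.exp_pos (-x), sq_nonneg x, mul_pos hx1 hx]
  intro x hx
  have h0 : G 0 = 0 := by simp [hG]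
  have := hmono (mem_Ici.2 le_rfl) (mem_Ici.2 hx) hx
  rw [h0] at this
  exact this

/-- The density function of the minimum cost `C_{3,3,3}` of a perfect matching on `K_{3,3}`
is nonnegative on `[0,∞)` and integrates to 1. -/
theorem density_C333_nonneg_and_integrates_to_one
    (f : ℝ → ℝ)
    (hf : f = fun x => (9 * x ^ 4 / 4 + 12 * x ^ 3 - 15 * x ^ 2 + 36 * x - 36) * exp (-3 * x)
      + 36 * exp (-4 * x)) :
    (∀ x : ℝ, 0 ≤ x → 0 ≤ f x) ∧ ∫ x in Set.Ioi (0 : ℝ), f x = 1 := by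
  constructor
  · intro x hx
    have hG := G_nonneg x hx
    have key : f x = Real.exp (-3 * x) *
        (9 * x ^ 4 / 4 + 12 * x ^ 3 - 15 * x ^ 2 + 36 * x - 36 + 36 * Real.exp (-x)) := by
      rw [hf]
      have : Real.exp (-4 * x) = Real.exp (-3 * x) * Real.exp (-x) := by
        rw [← Real.exp_add]; ring_nf
      simp only [this]
      ring
    rw [key]
    positivity
  · have i4 := integrable_pow_exp 4 (b := 3) (by norm_num)
    have i3 := integrable_pow_exp 3 (b := 3) (by norm_num)
    have i2 := integrable_pow_exp 2 (b := 3) (by norm_num)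
    have i1 := integrable_pow_exp 1 (b := 3) (by norm_num)
    have i0 := integrable_pow_exp 0 (b := 3) (by norm_num)
    have j0 := integrable_pow_exp 0 (b := 4) (by norm_num)
    have key : ∀ x : ℝ, f x =
        9/4 * (x ^ 4 * Real.exp (-3 * x)) + 12 * (x ^ 3 * Real.exp (-3 * x))
        + (-15) * (x ^ 2 * Real.exp (-3 * x)) + 36 * (x ^ 1 * Real.exp (-3 * x))
        + (-36) * (x ^ 0 * Real.exp (-3 * x)) + 36 * (x ^ 0 * Real.exp (-4 * x)) := by
      intro x; rw [hf]; ring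
    rw [show (∫ x in Set.Ioi (0:ℝ), f x) = ∫ x in Set.Ioi (0:ℝ),
        (9/4 * (x ^ 4 * Real.exp (-3 * x)) + 12 * (x ^ 3 * Real.exp (-3 * x))
        + (-15) * (x ^ 2 * Real.exp (-3 * x)) + 36 * (x ^ 1 * Real.exp (-3 * x))
        + (-36) * (x ^ 0 * Real.exp (-3 * x)) + 36 * (x ^ 0 * Real.exp (-4 * x))) from
      integral_congr_ae (Filter.Eventually.of_forall fun x => key x)]
    have hA : IntegrableOn (fun x : ℝ => 9/4 * (x ^ 4 * Real.exp (-3 * x))) (Ioi 0) :=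
      i4.const_mul _
    have hB : IntegrableOn (fun x : ℝ => 12 * (x ^ 3 * Real.exp (-3 * x))) (Ioi 0) :=
      i3.const_mul _
    have hC : IntegrableOn (fun x : ℝ => (-15) * (x ^ 2 * Real.exp (-3 * x))) (Ioi 0) :=
      i2.const_mul _
    have hD : IntegrableOn (fun x : ℝ => 36 * (x ^ 1 * Real.exp (-3 * x))) (Ioi 0) :=
      i1.const_mul _
    have hE : IntegrableOn (fun x : ℝ => (-36) * (x ^ 0 * Real.exp (-3 * x))) (Ioi 0) :=
      i0.const_mul _
    have hF : IntegrableOn (fun x : ℝ => 36 * (x ^ 0 * Real.exp (-4 * x))) (Ioi 0) :=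
      j0.const_mul _
    have hAB : IntegrableOn (fun x : ℝ => 9/4 * (x ^ 4 * Real.exp (-3 * x))
        + 12 * (x ^ 3 * Real.exp (-3 * x))) (Ioi 0) := hA.add hB
    have hABC : IntegrableOn (fun x : ℝ => 9/4 * (x ^ 4 * Real.exp (-3 * x))
        + 12 * (x ^ 3 * Real.exp (-3 * x)) + (-15) * (x ^ 2 * Real.exp (-3 * x))) (Ioi 0) :=
      hAB.add hC
    have hABCD : IntegrableOn (fun x : ℝ => 9/4 * (x ^ 4 * Real.exp (-3 * x))
        + 12 * (x ^ 3 * Real.exp (-3 * x)) + (-15) * (x ^ 2 * Real.exp (-3 * x))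
        + 36 * (x ^ 1 * Real.exp (-3 * x))) (Ioi 0) := hABC.add hD
    have hABCDE : IntegrableOn (fun x : ℝ => 9/4 * (x ^ 4 * Real.exp (-3 * x))
        + 12 * (x ^ 3 * Real.exp (-3 * x)) + (-15) * (x ^ 2 * Real.exp (-3 * x))
        + 36 * (x ^ 1 * Real.exp (-3 * x)) + (-36) * (x ^ 0 * Real.exp (-3 * x))) (Ioi 0) :=
      hABCD.add hE
    rw [integral_add hABCDE hF, integral_add hABCD hE, integral_add hABC hD,
      integral_add hAB hC, integral_add hA hB]
    simp only [integral_const_mul]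
    rw [integral_pow_exp 4 (by norm_num : (0:ℝ) < 3),
      integral_pow_exp 3 (by norm_num : (0:ℝ) < 3),
      integral_pow_exp 2 (by norm_num : (0:ℝ) < 3),
      integral_pow_exp 1 (by norm_num : (0:ℝ) < 3),
      integral_pow_exp 0 (by norm_num : (0:ℝ) < 3),
      integral_pow_exp 0 (by norm_num : (0:ℝ) < 4)]
    norm_num [Nat.factorial]
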